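/- Let T be a triangulated category with countable direct sums, and let X_0 → X_1 → X_2 → ⋯ be a sequence of morphisms in T with X_0 compact. If the homotopy colimit of the sequence is a zero object, then there exists a natural number a such that the composite morphism X_0 → X_a is zero. (The key step in the proof of Theorem 4.1 of the paper.) -/

import Mathlib

open CategoryTheory CategoryTheory.Limits CategoryTheory.Pretriangulated

universe v u

variable {C : Type u} [Category.{v} C] [HasZeroObject C] [HasShift C ℤ]
  [Preadditive C] [∀ n : ℤ, (shiftFunctor C n).Additive] [Pretriangulated C]

/-- An object `N` of a triangulated category is compact if for every family of objects
`(X_i)` (whose coproduct exists), the canonical map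
`⊕_i Hom(N, X_i) → Hom(N, ⊕_i X_i)` is bijective. -/
def IsCompactObj (N : C) : Prop :=
  ∀ ⦃I : Type v⦄ (X : I → C) [HasCoproduct X],
    letI := Classical.decEq I
    Function.Bijective
      (DirectSum.toAddMonoid
        (fun i => AddMonoidHom.mk' (fun g : N ⟶ X i => g ≫ Sigma.ι X i)
          (fun _ _ => Preadditive.add_comp _ _ _ _ _ _)) :
        DirectSum I (fun i => N ⟶ X i) →+ (N ⟶ ∐ X))

/-- The composite `X 0 ⟶ X a` of the morphisms `s 0, …, s (a-1)`. -/
def compositeUpTo (X : ℕ → C) (s : ∀ n, X n ⟶ X (n + 1)) : ∀ a, (X 0 ⟶ X a)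
  | 0 => 𝟙 _
  | a + 1 => compositeUpTo X s a ≫ s a

/-- Let `T` be a triangulated category with countable direct sums, and let
`X 0 ⟶ X 1 ⟶ X 2 ⟶ ⋯` be a sequence of morphisms in `T` with `X 0` compact. If the
homotopy colimit of the sequence (a cone `H` of the morphism
`1 - s : ⊕ᵢ Xᵢ → ⊕ᵢ Xᵢ`) is a zero object, then some composite `X 0 ⟶ X a` is zero. -/
theorem composite_eq_zero_of_isZero_homotopyColimit [HasCountableCoproducts C]
    (X : ℕ → C) (s : ∀ n, X n ⟶ X (n + 1)) (hX : IsCompactObj (X 0))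
    (H : C) (g : (∐ X) ⟶ H) (h : H ⟶ (∐ X)⟦(1 : ℤ)⟧)
    (hdt : Triangle.mk (𝟙 (∐ X) - Sigma.desc fun i => s i ≫ Sigma.ι X (i + 1)) g h
      ∈ distTriang C)
    (hH : IsZero H) :
    ∃ a : ℕ, compositeUpTo X s a = 0 := by
  classical
  set σ : (∐ X) ⟶ (∐ X) := Sigma.desc fun i => s i ≫ Sigma.ι X (i + 1) with hσ
  have hiso : IsIso (𝟙 (∐ X) - σ) :=
    (Triangle.isZero₃_iff_isIso₁ _ hdt).1 hH
  -- transfer compactness to the `ℕ`-indexed family via `ULift`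
  let ε : ULift.{v} ℕ ≃ ℕ := Equiv.ulift
  haveI : HasColimitsOfShape (Discrete (ULift.{v} ℕ)) C :=
    hasColimitsOfShape_of_equivalence (Discrete.equivalence ε.symm)
  letI : DecidableEq (ULift.{v} ℕ) := Classical.decEq _
  have hbij' := @hX (ULift.{v} ℕ) (X ∘ ε) inferInstance
  set Φ' : DirectSum (ULift.{v} ℕ) (fun i => X 0 ⟶ (X ∘ ε) i) →+ (X 0 ⟶ ∐ (X ∘ ε)) :=
    (DirectSum.toAddMonoid
      (fun i => AddMonoidHom.mk' (fun g : X 0 ⟶ (X ∘ ε) i => g ≫ Sigma.ι (X ∘ ε) i)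
        (fun _ _ => Preadditive.add_comp _ _ _ _ _ _))) with hΦ'
  set Φ : DirectSum ℕ (fun i => X 0 ⟶ X i) →+ (X 0 ⟶ ∐ X) :=
    (DirectSum.toAddMonoid
      (fun i => AddMonoidHom.mk' (fun g : X 0 ⟶ X i => g ≫ Sigma.ι X i)
        (fun _ _ => Preadditive.add_comp _ _ _ _ _ _))) with hΦ
  set e : DirectSum ℕ (fun i => X 0 ⟶ X i) ≃+
      DirectSum (ULift.{v} ℕ) (fun i => X 0 ⟶ (X ∘ ε) i) :=
    DirectSum.equivCongrLeft ε.symm with he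
  have hfactor : ∀ x, Φ x = Φ' (e x) ≫ (Sigma.reindex ε X).hom := by
    intro x
    induction x using DirectSum.induction_on with
    | zero => simp
    | of i f =>
        have he2 : e (DirectSum.of (fun i => X 0 ⟶ X i) i f) =
            DirectSum.of (fun j => X 0 ⟶ (X ∘ ε) j) (ULift.up i) f := by
          apply DFinsupp.ext
          intro k
          rw [he]
          erw [DirectSum.equivCongrLeft_apply]
          obtain ⟨k⟩ := k
          simp only [Equiv.symm_symm]
          by_cases hk : k = i
          · subst hk
            show ((DirectSum.of (fun i => X 0 ⟶ X i) k) f) k = _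
            erw [DirectSum.of_eq_same, DirectSum.of_eq_same]
          · show ((DirectSum.of (fun i => X 0 ⟶ X i) i) f) k = _
            erw [DirectSum.of_eq_of_ne _ _ _ (fun hc => hk hc),
              DirectSum.of_eq_of_ne _ _ _
                (fun hc => hk (congrArg ULift.down hc))]
            rfl
        erw [he2, hΦ', hΦ, DirectSum.toAddMonoid_of, DirectSum.toAddMonoid_of]
        simp only [AddMonoidHom.mk'_apply, Category.assoc]
        erw [Category.assoc, Sigma.ι_reindex_hom]
        rfl
    | add x y hx hy =>
        simp only [map_add, Preadditive.add_comp, hx, hy]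
  have hbij : Function.Bijective Φ := by
    rw [funext hfactor]
    have heq : (fun x => Φ' (e x) ≫ (Sigma.reindex ε X).hom) =
        ((fun g : X 0 ⟶ ∐ (X ∘ ε) => g ≫ (Sigma.reindex ε X).hom) ∘ ⇑Φ') ∘ ⇑e := rfl
    rw [heq]
    have hbij'' : Function.Bijective ⇑Φ' := hbij'
    have hpost : Function.Bijective
        (fun g : X 0 ⟶ ∐ (X ∘ ε) => g ≫ (Sigma.reindex ε X).hom) :=
      (Equiv.mk (fun g : X 0 ⟶ ∐ (X ∘ ε) => g ≫ (Sigma.reindex ε X).hom)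
        (fun g => g ≫ (Sigma.reindex ε X).inv) (fun g => by simp) (fun g => by simp)).bijective
    exact (hpost.comp hbij'').comp e.bijective
  -- the "shift" map on the direct sum
  set S : DirectSum ℕ (fun i => X 0 ⟶ X i) →+ DirectSum ℕ (fun i => X 0 ⟶ X i) :=
    DirectSum.toAddMonoid (fun i =>
      (DirectSum.of (fun j => X 0 ⟶ X j) (i + 1)).comp
        (AddMonoidHom.mk' (fun g : X 0 ⟶ X i => g ≫ s i)
          (fun _ _ => Preadditive.add_comp _ _ _ _ _ _))) with hS
  have hΦS : ∀ x, Φ (S x) = Φ x ≫ σ := by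
    intro x
    induction x using DirectSum.induction_on with
    | zero => simp
    | of i f =>
        simp only [hS, hΦ, DirectSum.toAddMonoid_of, AddMonoidHom.coe_comp,
          Function.comp_apply, AddMonoidHom.mk'_apply, hσ]
        simp [Category.assoc]
    | add x y hx hy =>
        simp [map_add, hx, hy, Preadditive.add_comp]
  -- lift the inclusion of X 0 along 1 - σ
  have hf : (Sigma.ι X 0 ≫ inv (𝟙 (∐ X) - σ)) ≫ (𝟙 (∐ X) - σ) = Sigma.ι X 0 := by
    rw [Category.assoc, IsIso.inv_hom_id, Category.comp_id]
  obtain ⟨d, hd⟩ := hbij.2 (Sigma.ι X 0 ≫ inv (𝟙 (∐ X) - σ))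
  have key : d - S d = DirectSum.of (fun j => X 0 ⟶ X j) 0 (𝟙 (X 0)) := by
    apply hbij.1
    rw [map_sub, hΦS]
    have h0 : Φ (DirectSum.of (fun j => X 0 ⟶ X j) 0 (𝟙 (X 0))) = Sigma.ι X 0 := by
      simp [hΦ]
    rw [h0]
    rw [← hd] at hf
    rw [← hf, Preadditive.comp_sub, Category.comp_id]
  -- component formula for S
  have hScomp : ∀ (x : DirectSum ℕ (fun i => X 0 ⟶ X i)) (i : ℕ),
      (S x) (i + 1) = x i ≫ s i ∧ (S x) 0 = 0 := by
    intro x i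
    induction x using DirectSum.induction_on with
    | zero => simp
    | of j f =>
        constructor
        · simp only [hS, DirectSum.toAddMonoid_of, AddMonoidHom.coe_comp,
            Function.comp_apply, AddMonoidHom.mk'_apply]
          by_cases hj : j = i
          · subst hj; simp
          · rw [DirectSum.of_eq_of_ne _ _ _ (by omega),
              DirectSum.of_eq_of_ne _ _ _ (by omega), Limits.zero_comp]
        · simp only [hS, DirectSum.toAddMonoid_of, AddMonoidHom.coe_comp,
            Function.comp_apply, AddMonoidHom.mk'_apply]
          rw [DirectSum.of_eq_of_ne _ _ _ (by omega)]
    | add x y hx hy =>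
        constructor
        · rw [map_add, DirectSum.add_apply, hx.1, hy.1, DirectSum.add_apply,
            Preadditive.add_comp]
        · rw [map_add, DirectSum.add_apply, hx.2, hy.2, add_zero]
  have hcomp : ∀ i, d i = compositeUpTo X s i := by
    intro i
    induction i with
    | zero =>
        have h0 := congrArg (fun z => z 0) key
        simp only [DirectSum.sub_apply, (hScomp d 0).2, sub_zero,
          DirectSum.of_eq_same] at h0
        simpa [compositeUpTo] using h0
    | succ i ih =>
        have h1 := congrArg (fun z => z (i + 1)) key
        simp only [DirectSum.sub_apply, (hScomp d i).1] at h1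
        rw [DirectSum.of_eq_of_ne _ _ _ (by omega)] at h1
        have h2 : d (i + 1) = d i ≫ s i := sub_eq_zero.1 h1
        rw [h2, ih]; rfl
  -- d has finite support
  obtain ⟨a, ha⟩ : ∃ a, d a = 0 := by
    refine ⟨(DFinsupp.support d).sup id + 1, ?_⟩
    by_contra hne
    have hmem : (DFinsupp.support d).sup id + 1 ∈ DFinsupp.support d :=
      DFinsupp.mem_support_iff.2 hne
    have := Finset.le_sup (f := id) hmem
    simp only [id_eq] at this
    omega
  exact ⟨a, by rw [← hcomp, ha]⟩
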